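/- Let K be a field of characteristic 0, let n ∈ {3, 4, 6}, let E be an elliptic curve over K, and let C be a subgroup of E(\bar{K}) cyclic of order n that is mapped to itself by every σ ∈ Gal(\bar{K}/K). Then C is pointwise defined over an extension F of K of degree at most 2, i.e. there is a field F with K ⊆ F ⊆ \bar{K}, [F:K] ≤ 2, such that every point of C lies in the image of E(F) in E(\bar{K}). -/

import Mathlib

open WeierstrassCurve IntermediateField Module

open scoped Classical

/-- `E(K)` contains a subgroup isomorphic to `T`. -/
def WeierstrassCurve.ContainsTorsion {K : Type*} [Field K] (E : WeierstrassCurve K)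
    (T : Type) [AddCommGroup T] : Prop :=
  ∃ φ : T →+ E.toAffine.Point, Function.Injective φ

/-- The set of `j`-invariants of elliptic curves over `K` whose Mordell-Weil group contains
a subgroup isomorphic to `T`. -/
noncomputable def torsionJSet (K : Type*) [Field K] (T : Type) [AddCommGroup T] : Set K :=
  {j | ∃ (E : WeierstrassCurve K) (hE : E.IsElliptic),
    @WeierstrassCurve.j K _ E hE = j ∧ E.ContainsTorsion T}

/-- `E` has an `n`-isogeny over `K`: a Galois-stable cyclic subgroup of order `n`
of the points of `E` over an algebraic closure of `K`. -/
def WeierstrassCurve.HasDegIsogeny {K : Type*} [Field K] (E : WeierstrassCurve K) (n : ℕ) :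
    Prop :=
  ∃ C : AddSubgroup (E.baseChange (AlgebraicClosure K)).toAffine.Point,
    Nonempty (C ≃+ ZMod n) ∧
    ∀ (σ : AlgebraicClosure K ≃ₐ[K] AlgebraicClosure K), ∀ P ∈ C,
      WeierstrassCurve.Affine.Point.map (W' := E.toAffine) σ.toAlgHom P ∈ C

/-- The set of `j`-invariants of elliptic curves over `K` admitting an `n`-isogeny. -/
noncomputable def isogenyJSet (K : Type*) [Field K] (n : ℕ) : Set K :=
  {j | ∃ (E : WeierstrassCurve K) (hE : E.IsElliptic),
    @WeierstrassCurve.j K _ E hE = j ∧ E.HasDegIsogeny n}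

/-- The set of `j`-invariants of elliptic curves over `K` having a point of order `n`. -/
noncomputable def pointOrderJSet (K : Type*) [Field K] (n : ℕ) : Set K :=
  {j | ∃ (E : WeierstrassCurve K) (hE : E.IsElliptic),
    @WeierstrassCurve.j K _ E hE = j ∧ ∃ P : E.toAffine.Point, addOrderOf P = n}

/-- The short Weierstrass curve `y² = x³ + ax + b`. -/
def shortW (K : Type*) [Field K] (a b : K) : WeierstrassCurve K :=
  { a₁ := 0, a₂ := 0, a₃ := 0, a₄ := a, a₆ := b }

lemma units_pm {n : ℕ} (hn : n = 3 ∨ n = 4 ∨ n = 6) (u : (ZMod n)ˣ) :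
    (u : ZMod n) = 1 ∨ (u : ZMod n) = -1 := by
  rcases hn with rfl | rfl | rfl <;> revert u <;> decide

lemma map_id_of_forall {K : Type*} [Field K] (E : WeierstrassCurve K)
    (f : AlgebraicClosure K →ₐ[K] AlgebraicClosure K) (hf : ∀ z, f z = z)
    (P : (E.baseChange (AlgebraicClosure K)).toAffine.Point) :
    WeierstrassCurve.Affine.Point.map (W' := E.toAffine) f P = P := by
  cases P with
  | zero => rfl
  | some h =>
    rw [WeierstrassCurve.Affine.Point.map_some]
    simp [hf]

lemma fixed_mem_range {K : Type*} [Field K] [CharZero K] (x : AlgebraicClosure K)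
    (hx : ∀ σ : AlgebraicClosure K ≃ₐ[K] AlgebraicClosure K, σ x = x) :
    ∃ c : K, algebraMap K (AlgebraicClosure K) c = x := by
  by_contra h
  push_neg at h
  have hsep : IsSeparable K x := Algebra.IsSeparable.isSeparable K x
  have hsp : ((minpoly K x).map (algebraMap K (AlgebraicClosure K))).Splits :=
    IsAlgClosed.splits _
  have hb : x ∉ (⊥ : Subalgebra K (AlgebraicClosure K)) := by
    rw [Algebra.mem_bot]
    rintro ⟨c, hc⟩
    exact h c hc
  obtain ⟨y, hne, hconj⟩ := (notMem_iff_exists_ne_and_isConjRoot hsep hsp).mp hb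
  obtain ⟨σ, hσ⟩ := hconj.symm.exists_algEquiv
  exact hne (by rw [← hσ, hx σ])

/-- Over a field `K` of characteristic 0, a Galois-stable cyclic subgroup
of order `n ∈ {3, 4, 6}` of the points of an elliptic curve `E` over an algebraic closure of
`K` is pointwise defined over an extension of `K` of degree at most 2. -/
theorem cyclic_subgroup_defined_over_quadratic (K : Type*) [Field K] [CharZero K]
    (n : ℕ) (hn : n ∈ ({3, 4, 6} : Set ℕ)) (E : WeierstrassCurve K) (hE : E.Δ ≠ 0)
    (C : AddSubgroup (E.baseChange (AlgebraicClosure K)).toAffine.Point)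
    (hC : Nonempty (C ≃+ ZMod n))
    (hGal : ∀ (σ : AlgebraicClosure K ≃ₐ[K] AlgebraicClosure K), ∀ P ∈ C,
      WeierstrassCurve.Affine.Point.map (W' := E.toAffine) σ.toAlgHom P ∈ C) :
    ∃ F : IntermediateField K (AlgebraicClosure K), FiniteDimensional K F ∧
      Module.finrank K F ≤ 2 ∧
      ∀ P ∈ C, P ∈ Set.range (WeierstrassCurve.Affine.Point.map (W' := E.toAffine) F.val) := by
  classical
  simp only [Set.mem_insert_iff, Set.mem_singleton_iff] at hn
  obtain ⟨e⟩ := hC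
  set Kb := AlgebraicClosure K
  haveI : CharZero Kb := charZero_of_injective_algebraMap (algebraMap K Kb).injective
  haveI : NeZero n := ⟨by rcases hn with rfl | rfl | rfl <;> norm_num⟩
  haveI : Fact (1 < n) := ⟨by rcases hn with rfl | rfl | rfl <;> norm_num⟩
  set g : C := e.symm 1 with hg
  -- every σ sends g to ±g
  have key : ∀ σ : Kb ≃ₐ[K] Kb,
      WeierstrassCurve.Affine.Point.map (W' := E.toAffine) σ.toAlgHom (g : _) = (g : _) ∨
      WeierstrassCurve.Affine.Point.map (W' := E.toAffine) σ.toAlgHom (g : _) = -(g : _) := by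
    intro σ
    let φ : C →+ C := AddMonoidHom.codRestrict
      ((WeierstrassCurve.Affine.Point.map (W' := E.toAffine) σ.toAlgHom).comp C.subtype) C
      (fun P => hGal σ P P.2)
    let φ' : C →+ C := AddMonoidHom.codRestrict
      ((WeierstrassCurve.Affine.Point.map (W' := E.toAffine) σ.symm.toAlgHom).comp C.subtype) C
      (fun P => hGal σ.symm P P.2)
    have hcomp : ∀ P : C, φ' (φ P) = P := by
      intro P
      ext
      simp only [φ, φ', AddMonoidHom.codRestrict_apply, AddMonoidHom.comp_apply,
        AddSubgroup.coe_subtype, WeierstrassCurve.Affine.Point.map_map]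
      have hm := map_id_of_forall E (σ.symm.toAlgHom.comp σ.toAlgHom) (by intro z; simp) (P : _)
      rw [← WeierstrassCurve.Affine.Point.map_map] at hm
      exact hm
    have hcomp' : ∀ P : C, φ (φ' P) = P := by
      intro P
      ext
      simp only [φ, φ', AddMonoidHom.codRestrict_apply, AddMonoidHom.comp_apply,
        AddSubgroup.coe_subtype, WeierstrassCurve.Affine.Point.map_map]
      have hm := map_id_of_forall E (σ.toAlgHom.comp σ.symm.toAlgHom) (by intro z; simp) (P : _)
      rw [← WeierstrassCurve.Affine.Point.map_map] at hm
      exact hm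
    let ψ : C ≃+ C :=
      { toFun := φ, invFun := φ', left_inv := hcomp, right_inv := hcomp',
        map_add' := φ.map_add }
    let f : AddAut (ZMod n) := (e.symm.trans ψ).trans e
    let u : (ZMod n)ˣ := ZMod.AddAutEquivUnits n f
    have hu1 : (u : ZMod n) = f 1 := rfl
    have hf1 : f 1 = e (ψ (e.symm 1)) := rfl
    rcases units_pm hn u with h | h
    · left
      have hψ : ψ (e.symm 1) = e.symm 1 := by
        have := h.symm.trans (hu1.trans hf1)
        exact e.injective (by simpa using this.symm)
      have := congrArg (Subtype.val) hψ
      exact this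
    · right
      have hψ : ψ (e.symm 1) = - e.symm 1 := by
        have h2 : e (ψ (e.symm 1)) = -1 := by rw [← hf1, ← hu1, h]
        apply e.injective
        simpa using h2
      have := congrArg (Subtype.val) hψ
      simp [ψ, φ] at this
      exact this
  -- g is a nonzero point
  have hg0 : (g : (E.baseChange Kb).toAffine.Point) ≠ 0 := by
    intro h0
    have : g = 0 := Subtype.ext h0
    have : (1 : ZMod n) = 0 := by
      have := congrArg e this
      simpa [hg] using this
    exact one_ne_zero this
  -- extract coordinates
  obtain ⟨x, y, hxy, hsome⟩ : ∃ x, ∃ y, ∃ h : (E.baseChange Kb).toAffine.Nonsingular x y,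
      (g : (E.baseChange Kb).toAffine.Point) = .some _ _ h := by
    cases hgp : (g : (E.baseChange Kb).toAffine.Point) with
    | zero => exact absurd hgp hg0
    | some _ _ h => exact ⟨_, _, h, rfl⟩
  -- x is Galois-fixed, y transforms as y or negY
  have hcoord : ∀ σ : Kb ≃ₐ[K] Kb, σ x = x ∧ (σ y = y ∨ σ y = -y - (E.baseChange Kb).a₁ * x - (E.baseChange Kb).a₃) := by
    intro σ
    rcases key σ with h | h
    · rw [hsome, WeierstrassCurve.Affine.Point.map_some] at h
      obtain ⟨h1, h2⟩ := by simpa using h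
      exact ⟨h1, Or.inl h2⟩
    · rw [hsome, WeierstrassCurve.Affine.Point.neg_some, WeierstrassCurve.Affine.Point.map_some] at h
      obtain ⟨h1, h2⟩ := by simpa [WeierstrassCurve.Affine.negY] using h
      exact ⟨h1, Or.inr h2⟩
  -- a₁, a₃ of the base-changed curve
  set a1 : Kb := (E.baseChange Kb).a₁ with ha1
  set a3 : Kb := (E.baseChange Kb).a₃ with ha3
  have ha1' : a1 = algebraMap K Kb E.a₁ := rfl
  have ha3' : a3 = algebraMap K Kb E.a₃ := rfl
  set t : Kb := y + (a1 * x + a3) / 2 with ht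
  have hfix2 : ∀ σ : Kb ≃ₐ[K] Kb, σ (t ^ 2) = t ^ 2 := by
    intro σ
    obtain ⟨hx, hy⟩ := hcoord σ
    have hA1 : σ a1 = a1 := by rw [ha1']; exact σ.commutes E.a₁
    have hA3 : σ a3 = a3 := by rw [ha3']; exact σ.commutes E.a₃
    have h2 : (2 : Kb) ≠ 0 := two_ne_zero
    rcases hy with hy | hy
    · simp [ht, map_add, map_mul, map_div₀, map_ofNat, hx, hy, hA1, hA3, map_pow]
    · have : σ t = -t := by
        rw [ht]
        rw [map_add, map_div₀, map_add, map_mul, hA1, hx, hA3, hy]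
        push_cast [map_ofNat]
        ring
      rw [map_pow, this]
      ring
  obtain ⟨c, hc⟩ := fixed_mem_range (t ^ 2) hfix2
  obtain ⟨x0, hx0⟩ := fixed_mem_range x (fun σ => (hcoord σ).1)
  -- the field F = K(t)
  have hint : IsIntegral K t := by
    refine ⟨Polynomial.X ^ 2 - Polynomial.C c, ?_, ?_⟩
    · exact (Polynomial.monic_X_pow 2).sub_of_left (by
        simpa using Polynomial.degree_C_le.trans_lt (by norm_num))
    · simp [Polynomial.eval₂_sub, hc]
      exact sub_eq_zero.mpr hc.symm
  refine ⟨K⟮t⟯, IntermediateField.adjoin.finiteDimensional hint, ?_, ?_⟩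
  · rw [IntermediateField.adjoin.finrank hint]
    have hd : (minpoly K t).degree ≤ (Polynomial.X ^ 2 - Polynomial.C c : Polynomial K).degree := by
      apply minpoly.degree_le_of_ne_zero
      · intro h
        have := congrArg Polynomial.natDegree h
        simp [Polynomial.natDegree_X_pow_sub_C] at this
      · simp [Polynomial.aeval_def, hc]
        exact sub_eq_zero.mpr hc.symm
    rw [Polynomial.degree_X_pow_sub_C (by norm_num)] at hd
    exact Polynomial.natDegree_le_iff_degree_le.mpr hd
  · -- membership of coordinates
    have htF : t ∈ K⟮t⟯ := IntermediateField.mem_adjoin_simple_self K t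
    have hxF : x ∈ K⟮t⟯ := by rw [← hx0]; exact IntermediateField.algebraMap_mem _ _
    have ha1F : a1 ∈ K⟮t⟯ := by rw [ha1']; exact IntermediateField.algebraMap_mem _ _
    have ha3F : a3 ∈ K⟮t⟯ := by rw [ha3']; exact IntermediateField.algebraMap_mem _ _
    have hyF : y ∈ K⟮t⟯ := by
      have : y = t - (a1 * x + a3) / 2 := by rw [ht]; ring
      rw [this]
      refine sub_mem htF (div_mem (add_mem (mul_mem ha1F hxF) ha3F) ?_)
      rw [show (2 : Kb) = algebraMap K Kb 2 from (map_ofNat (algebraMap K Kb) 2).symm]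
      exact IntermediateField.algebraMap_mem _ _
    set F := K⟮t⟯
    set x' : F := ⟨x, hxF⟩
    set y' : F := ⟨y, hyF⟩
    have hval : F.val x' = x ∧ F.val y' = y := ⟨rfl, rfl⟩
    have hns : (E.baseChange F).toAffine.Nonsingular x' y' := by
      have := (WeierstrassCurve.Affine.baseChange_nonsingular (W := E) (f := F.val)
        F.val.injective x' y').mp ?_
      · exact this
      · show (E.baseChange Kb).toAffine.Nonsingular (F.val x') (F.val y')
        rw [hval.1, hval.2]
        exact hxy
    set gF : (E.baseChange F).toAffine.Point := .some _ _ hns with hgF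
    have hmapg : WeierstrassCurve.Affine.Point.map (W' := E.toAffine) F.val gF
        = (g : (E.baseChange Kb).toAffine.Point) := by
      rw [hgF, WeierstrassCurve.Affine.Point.map_some, hsome]
      rfl
    intro P hP
    refine ⟨(e ⟨P, hP⟩).val • gF, ?_⟩
    rw [map_nsmul, hmapg]
    have : (⟨P, hP⟩ : C) = (e ⟨P, hP⟩).val • g := by
      apply e.injective
      rw [map_nsmul]
      simp [hg, nsmul_eq_mul, ZMod.natCast_val, ZMod.cast_id]
    have := congrArg Subtype.val this
    simpa using this.symm
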